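/- Let X_1, X_2, … be real random variables with continuous marginal cdfs (so that X_1,…,X_n are almost surely pairwise distinct), let ε_1, ε_2, … be real random variables on the same probability space, let h_0 : ℝ → ℝ, and set Y_t = h_0(X_t) + ε_t. Suppose the anomaly-free outputs are in p-reasonable order for some p > 0, i.e., B⁰_{n,p} := n^{-1/p} Σ_{t=2}^n |h_0(X_{t:n}) − h_0(X_{t-1:n})| is bounded in probability. Then B_{n,p} := n^{-1/p} Σ_{t=2}^n |Y_{t,n} − Y_{t-1,n}| → ∞ in probability if and only if n^{-1/p} Σ_{t=2}^n |ε_{t,n} − ε_{t-1,n}| → ∞ in probability, where Y_{t,n} and ε_{t,n} denote the concomitants of Y_t and ε_t with respect to the inputs X_t. -/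

import Mathlib

open MeasureTheory ProbabilityTheory Filter
open scoped Classical

/-- The `t`-th order statistic (1-based) of `X 1, …, X n`. -/
noncomputable def orderStat {Ω : Type*} (X : ℕ → Ω → ℝ) (n t : ℕ) (ω : Ω) : ℝ :=
  (List.insertionSort (· ≤ ·) ((List.range n).map fun s => X (s + 1) ω)).getD (t - 1) 0

/-- The concomitant `Y_{t,n} = Σ_{s=1}^n Y_s · 1{X_s = X_{t:n}}`. -/
noncomputable def concomitant {Ω : Type*} (X Y : ℕ → Ω → ℝ) (n t : ℕ) (ω : Ω) : ℝ :=
  ∑ s ∈ Finset.Icc 1 n, Y s ω * (if X s ω = orderStat X n t ω then 1 else 0)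

/-- The cumulative distribution function of a random variable `X` under `P`. -/
noncomputable def cdfOf {Ω : Type*} [MeasurableSpace Ω] (P : Measure Ω) (X : Ω → ℝ) : ℝ → ℝ :=
  fun x => (P {ω | X ω ≤ x}).toReal

/-- `Z n` is bounded in probability (O_P(1)). -/
def BoundedInProb {Ω : Type*} [MeasurableSpace Ω] (P : Measure Ω) (Z : ℕ → Ω → ℝ) : Prop :=
  ∀ ε : ℝ, 0 < ε → ∃ M : ℝ, 0 < M ∧
    ∀ᶠ n in atTop, P {ω | M < |Z n ω|} ≤ ENNReal.ofReal ε

/-- Convergence in probability of `Z n` to `+∞`. -/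
def TendstoInProbAtTop {Ω : Type*} [MeasurableSpace Ω] (P : Measure Ω)
    (Z : ℕ → Ω → ℝ) : Prop :=
  ∀ M : ℝ, Tendsto (fun n => P {ω | Z n ω ≤ M}) atTop (nhds 0)

lemma exists_concomitant_rep {Ω : Type*} (X : ℕ → Ω → ℝ) (n t : ℕ) (ω : Ω)
    (ht1 : 1 ≤ t) (htn : t ≤ n)
    (hd : ∀ s ∈ Finset.Icc 1 n, ∀ s' ∈ Finset.Icc 1 n, s ≠ s' → X s ω ≠ X s' ω) :
    ∃ s ∈ Finset.Icc 1 n, X s ω = orderStat X n t ω ∧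
      ∀ Y : ℕ → Ω → ℝ, concomitant X Y n t ω = Y s ω := by
  set l := (List.range n).map (fun s => X (s + 1) ω) with hl
  have hlen : (List.insertionSort (· ≤ ·) l).length = n := by
    rw [(List.perm_insertionSort (· ≤ ·) l).length_eq, List.length_map, List.length_range]
  have htlt : t - 1 < (List.insertionSort (· ≤ ·) l).length := by omega
  have hmem : orderStat X n t ω ∈ List.insertionSort (· ≤ ·) l := by
    rw [orderStat, List.getD_eq_getElem _ _ htlt]
    exact List.getElem_mem _
  have hmem' : orderStat X n t ω ∈ l := ((List.perm_insertionSort _ l).mem_iff).mp hmem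
  obtain ⟨a, ha, hXa⟩ := List.mem_map.mp hmem'
  have han : a < n := List.mem_range.mp ha
  have hamem : a + 1 ∈ Finset.Icc 1 n := Finset.mem_Icc.mpr ⟨by omega, by omega⟩
  refine ⟨a + 1, hamem, hXa, ?_⟩
  intro Y
  rw [concomitant, Finset.sum_eq_single (a + 1)]
  · simp [hXa]
  · intro s hs hne
    have : X s ω ≠ orderStat X n t ω := fun h => hd s hs (a + 1) hamem hne (h.trans hXa.symm)
    simp [this]
  · intro h; exact absurd hamem h

lemma bridge {Ω : Type*} [MeasurableSpace Ω] (P : Measure Ω) (A B E : ℕ → Ω → ℝ)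
    (hB : BoundedInProb P B)
    (hae : ∀ n, ∀ᵐ ω ∂P, A n ω ≤ B n ω + E n ω)
    (hA : TendstoInProbAtTop P A) : TendstoInProbAtTop P E := by
  intro M
  rw [ENNReal.tendsto_nhds_zero]
  intro δ hδ
  obtain ⟨r, hr0, hrδ⟩ : ∃ r : ℝ, 0 < r ∧ ENNReal.ofReal r ≤ δ / 2 := by
    rcases eq_or_ne (δ / 2) ⊤ with h | h
    · exact ⟨1, one_pos, by simp [h]⟩
    · exact ⟨(δ / 2).toReal, ENNReal.toReal_pos (ENNReal.half_pos hδ.ne').ne' h,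
        (ENNReal.ofReal_toReal h).le⟩
  obtain ⟨K, hK0, hKev⟩ := hB r hr0
  have hA2 : ∀ᶠ n in atTop, P {ω | A n ω ≤ M + K} ≤ δ / 2 :=
    ((hA (M + K)).eventually_lt_const (ENNReal.half_pos hδ.ne')).mono fun n h => h.le
  filter_upwards [hKev, hA2] with n h1 h2
  set S1 : Set Ω := {ω | A n ω ≤ M + K} with hS1
  set S2 : Set Ω := {ω | K < |B n ω|} with hS2
  have hsub : {ω | E n ω ≤ M} ≤ᵐ[P] ((S1 ∪ S2 : Set Ω) : Ω → Prop) := by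
    filter_upwards [hae n] with ω hω hE
    by_cases hB' : K < |B n ω|
    · exact Or.inr hB'
    · push_neg at hB'
      have hBK : B n ω ≤ K := (le_abs_self _).trans hB'
      exact Or.inl (show A n ω ≤ M + K by
        have hE' : E n ω ≤ M := hE
        linarith)
  calc P {ω | E n ω ≤ M}
      ≤ P (S1 ∪ S2) := measure_mono_ae hsub
    _ ≤ P S1 + P S2 := measure_union_le _ _
    _ ≤ δ / 2 + δ / 2 := add_le_add h2 (h1.trans hrδ)
    _ = δ := ENNReal.add_halves δ

theorem stmt_11 {Ω : Type*} [MeasurableSpace Ω] (P : Measure Ω) [IsProbabilityMeasure P]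
    (X ε : ℕ → Ω → ℝ) (hmeasX : ∀ t, Measurable (X t)) (hmeasε : ∀ t, Measurable (ε t))
    (hcdf : ∀ t : ℕ, 1 ≤ t → Continuous (cdfOf P (X t)))
    (hdist : ∀ s t : ℕ, 1 ≤ s → 1 ≤ t → s ≠ t → ∀ᵐ ω ∂P, X s ω ≠ X t ω)
    (h0 : ℝ → ℝ) (p : ℝ) (hp : 0 < p)
    (horder : BoundedInProb P (fun n ω => (n : ℝ) ^ (-(1 / p)) *
      ∑ t ∈ Finset.Icc 2 n, |h0 (orderStat X n t ω) - h0 (orderStat X n (t - 1) ω)|)) :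
    TendstoInProbAtTop P (fun n ω => (n : ℝ) ^ (-(1 / p)) *
      ∑ t ∈ Finset.Icc 2 n,
        |concomitant X (fun s ω' => h0 (X s ω') + ε s ω') n t ω -
          concomitant X (fun s ω' => h0 (X s ω') + ε s ω') n (t - 1) ω|) ↔
    TendstoInProbAtTop P (fun n ω => (n : ℝ) ^ (-(1 / p)) *
      ∑ t ∈ Finset.Icc 2 n,
        |concomitant X ε n t ω - concomitant X ε n (t - 1) ω|) := by
  have hc : ∀ n : ℕ, (0 : ℝ) ≤ (n : ℝ) ^ (-(1 / p)) :=
    fun n => Real.rpow_nonneg (Nat.cast_nonneg n) _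
  have hdistn : ∀ n : ℕ, ∀ᵐ ω ∂P,
      ∀ s ∈ Finset.Icc 1 n, ∀ s' ∈ Finset.Icc 1 n, s ≠ s' → X s ω ≠ X s' ω := by
    intro n
    rw [Filter.eventually_all_finset]
    intro s hs
    rw [Filter.eventually_all_finset]
    intro s' hs'
    rcases eq_or_ne s s' with h | h
    · exact Filter.Eventually.of_forall fun ω hne => absurd h hne
    · exact (hdist s s' (Finset.mem_Icc.mp hs).1 (Finset.mem_Icc.mp hs').1 h).mono
        fun ω hω _ => hω
  have key : ∀ n : ℕ, ∀ᵐ ω ∂P, ∀ t ∈ Finset.Icc 2 n,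
      concomitant X (fun s ω' => h0 (X s ω') + ε s ω') n t ω -
        concomitant X (fun s ω' => h0 (X s ω') + ε s ω') n (t - 1) ω =
      (h0 (orderStat X n t ω) - h0 (orderStat X n (t - 1) ω)) +
        (concomitant X ε n t ω - concomitant X ε n (t - 1) ω) := by
    intro n
    filter_upwards [hdistn n] with ω hω t ht
    have hm := Finset.mem_Icc.mp ht
    have step : ∀ u, 1 ≤ u → u ≤ n →
        concomitant X (fun s ω' => h0 (X s ω') + ε s ω') n u ω =
          h0 (orderStat X n u ω) + concomitant X ε n u ω := by
      intro u h1 h2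
      obtain ⟨s, hs, hXs, hrep⟩ := exists_concomitant_rep X n u ω h1 h2 hω
      rw [hrep (fun s ω' => h0 (X s ω') + ε s ω'), hrep ε, ← hXs]
    rw [step t (by omega) hm.2, step (t - 1) (by omega) (by omega)]
    ring
  have hae1 : ∀ n : ℕ, ∀ᵐ ω ∂P,
      (n : ℝ) ^ (-(1 / p)) * ∑ t ∈ Finset.Icc 2 n,
        |concomitant X (fun s ω' => h0 (X s ω') + ε s ω') n t ω -
          concomitant X (fun s ω' => h0 (X s ω') + ε s ω') n (t - 1) ω| ≤
      ((n : ℝ) ^ (-(1 / p)) * ∑ t ∈ Finset.Icc 2 n,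
        |h0 (orderStat X n t ω) - h0 (orderStat X n (t - 1) ω)|) +
      (n : ℝ) ^ (-(1 / p)) * ∑ t ∈ Finset.Icc 2 n,
        |concomitant X ε n t ω - concomitant X ε n (t - 1) ω| := by
    intro n
    filter_upwards [key n] with ω hω
    rw [← mul_add, ← Finset.sum_add_distrib]
    apply mul_le_mul_of_nonneg_left _ (hc n)
    apply Finset.sum_le_sum
    intro t ht
    rw [hω t ht]
    exact abs_add_le _ _
  have hae2 : ∀ n : ℕ, ∀ᵐ ω ∂P,
      (n : ℝ) ^ (-(1 / p)) * ∑ t ∈ Finset.Icc 2 n,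
        |concomitant X ε n t ω - concomitant X ε n (t - 1) ω| ≤
      ((n : ℝ) ^ (-(1 / p)) * ∑ t ∈ Finset.Icc 2 n,
        |h0 (orderStat X n t ω) - h0 (orderStat X n (t - 1) ω)|) +
      (n : ℝ) ^ (-(1 / p)) * ∑ t ∈ Finset.Icc 2 n,
        |concomitant X (fun s ω' => h0 (X s ω') + ε s ω') n t ω -
          concomitant X (fun s ω' => h0 (X s ω') + ε s ω') n (t - 1) ω| := by
    intro n
    filter_upwards [key n] with ω hω
    rw [← mul_add, ← Finset.sum_add_distrib]
    apply mul_le_mul_of_nonneg_left _ (hc n)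
    apply Finset.sum_le_sum
    intro t ht
    have h := hω t ht
    have heq : concomitant X ε n t ω - concomitant X ε n (t - 1) ω =
        (concomitant X (fun s ω' => h0 (X s ω') + ε s ω') n t ω -
          concomitant X (fun s ω' => h0 (X s ω') + ε s ω') n (t - 1) ω) -
        (h0 (orderStat X n t ω) - h0 (orderStat X n (t - 1) ω)) := by linarith
    rw [heq]
    calc |_ - _| ≤ |concomitant X (fun s ω' => h0 (X s ω') + ε s ω') n t ω -
          concomitant X (fun s ω' => h0 (X s ω') + ε s ω') n (t - 1) ω| +
          |h0 (orderStat X n t ω) - h0 (orderStat X n (t - 1) ω)| := abs_sub _ _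
      _ = _ := add_comm _ _
  constructor
  · intro hA
    exact bridge P _ _ _ horder hae1 hA
  · intro hE
    exact bridge P _ _ _ horder hae2 hE
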